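/- Let X be a Banach space and f : X → ℝ be locally Lipschitz, lower semicontinuous and bounded below. For any sequence ε_n ↓ 0 there exists a sequence (g_n) in X with f(g_n) → inf f and, for every h ∈ X, f⁰(g_n, h) ≥ −ε_n·‖h‖·(1 + ‖g_n‖)^{-1}. -/

import Mathlib

open Filter

/-- The Clarke generalized directional derivative
`f⁰(x,v) = limsup_{y→x, λ↓0} (f(y+λv) − f(y))/λ`. -/
noncomputable def clarkeDeriv {X : Type*} [NormedAddCommGroup X] [NormedSpace ℝ X]
    (f : X → ℝ) (x v : X) : ℝ :=
  Filter.limsup (fun p : X × ℝ => (f (p.1 + p.2 • v) - f p.1) / p.2)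
    ((nhds x) ×ˢ (nhdsWithin 0 (Set.Ioi 0)))

theorem my_ekeland {Y : Type*} [MetricSpace Y] [CompleteSpace Y] (f : Y → ℝ)
    (hlsc : LowerSemicontinuous f) (B : ℝ) (hB : ∀ x, B ≤ f x) (x₀ : Y) (ε : ℝ) (hε : 0 < ε) :
    ∃ g : Y, f g + ε * dist g x₀ ≤ f x₀ ∧ ∀ x, f g ≤ f x + ε * dist x g := by
  classical
  set S : Y → Set Y := fun x => {y | f y + ε * dist y x ≤ f x} with hS
  have hSx : ∀ x, x ∈ S x := by intro x; simp [hS]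
  have hSbdd : ∀ x, BddBelow (f '' S x) := fun x => ⟨B, by rintro a ⟨y, -, rfl⟩; exact hB y⟩
  have hchoice : ∀ (n : ℕ) (x : Y), ∃ y, y ∈ S x ∧ f y < sInf (f '' S x) + (1/2)^n := by
    intro n x
    have h1 : sInf (f '' S x) < sInf (f '' S x) + (1/2)^n := lt_add_of_pos_right _ (by positivity)
    obtain ⟨a, ⟨y, hy, rfl⟩, ha⟩ :=
      exists_lt_of_csInf_lt ⟨f x, Set.mem_image_of_mem f (hSx x)⟩ h1
    exact ⟨y, hy, ha⟩
  set u : ℕ → Y := fun n => Nat.rec x₀ (fun n x => (hchoice n x).choose) n with hu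
  have hu0 : u 0 = x₀ := rfl
  have hmem : ∀ n, u (n+1) ∈ S (u n) := fun n => (hchoice n (u n)).choose_spec.1
  have hlt : ∀ n, f (u (n+1)) < sInf (f '' S (u n)) + (1/2)^n :=
    fun n => (hchoice n (u n)).choose_spec.2
  have hchain : ∀ n m, n ≤ m → f (u m) + ε * dist (u m) (u n) ≤ f (u n) := by
    intro n m hnm
    induction m, hnm using Nat.le_induction with
    | base => simp
    | succ m hnm ih =>
      have h1 := hmem m
      have h2 : dist (u (m+1)) (u n) ≤ dist (u (m+1)) (u m) + dist (u m) (u n) :=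
        dist_triangle _ _ _
      have h3 := mul_le_mul_of_nonneg_left h2 hε.le
      simp only [hS, Set.mem_setOf_eq] at h1
      nlinarith
  set a : ℕ → ℝ := fun n => f (u n) with ha
  have hanti : Antitone a := by
    apply antitone_nat_of_succ_le
    intro n
    have h1 := hchain n (n+1) (Nat.le_succ n)
    nlinarith [mul_nonneg hε.le (dist_nonneg (x := u (n+1)) (y := u n))]
  have hbdda : BddBelow (Set.range a) := ⟨B, by rintro x ⟨n, rfl⟩; exact hB _⟩
  set L : ℝ := ⨅ n, a n with hLdef
  have hL : Tendsto a atTop (nhds L) := tendsto_atTop_ciInf hanti hbdda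
  have hLle : ∀ n, L ≤ a n := fun n => ciInf_le hbdda n
  have key : ∀ n m, n ≤ m → dist (u n) (u m) ≤ (a n - a m)/ε := by
    intro n m hnm
    have h1 := hchain n m hnm
    rw [le_div_iff₀ hε, dist_comm]
    nlinarith
  have hd : ∀ n m N, N ≤ n → N ≤ m → dist (u n) (u m) ≤ (a N - L)/ε := by
    have mono : ∀ n m N, N ≤ n → N ≤ m → (a n - a m)/ε ≤ (a N - L)/ε := by
      intro n m N hn hm
      gcongr
      exacts [hanti hn, hLle m]
    intro n m N hn hm
    rcases le_total n m with h | h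
    · exact (key n m h).trans (mono n m N hn hm)
    · rw [dist_comm]; exact (key m n h).trans (mono m n N hm hn)
  have hcauchy : CauchySeq u := by
    apply cauchySeq_of_le_tendsto_0 (fun N => (a N - L)/ε) hd
    have : Tendsto (fun N => (a N - L)/ε) atTop (nhds ((L - L)/ε)) :=
      ((hL.sub tendsto_const_nhds).div_const ε)
    simpa using this
  obtain ⟨g, hg⟩ := cauchySeq_tendsto_of_complete hcauchy
  have hfgL : f g ≤ L := by
    by_contra hcon
    push_neg at hcon
    set y := (L + f g)/2 with hy
    have hy1 : y < f g := by rw [hy]; linarith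
    have hy2 : L < y := by rw [hy]; linarith
    have hev : ∀ᶠ n in atTop, y < a n := hg.eventually (hlsc g y hy1)
    have hev2 : ∀ᶠ n in atTop, a n < y := hL.eventually_lt_const hy2
    obtain ⟨n, h1, h2⟩ := (hev.and hev2).exists
    linarith
  have hgd : ∀ n, dist g (u n) ≤ (a n - L)/ε := by
    intro n
    have htend : Tendsto (fun m => dist (u m) (u n)) atTop (nhds (dist g (u n))) :=
      hg.dist tendsto_const_nhds
    apply le_of_tendsto htend
    filter_upwards [eventually_ge_atTop n] with m hm
    exact hd m n n hm le_rfl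
  have hgS : ∀ n, f g + ε * dist g (u n) ≤ a n := by
    intro n
    have h1 : ε * dist g (u n) ≤ ε * ((a n - L)/ε) :=
      mul_le_mul_of_nonneg_left (hgd n) hε.le
    rw [mul_div_cancel₀ _ hε.ne'] at h1
    linarith
  refine ⟨g, hgS 0, ?_⟩
  intro x
  by_contra hx
  push_neg at hx
  have hxS : ∀ n, x ∈ S (u n) := by
    intro n
    have h1 : dist x (u n) ≤ dist x g + dist g (u n) := dist_triangle _ _ _
    have h2 := mul_le_mul_of_nonneg_left h1 hε.le
    have h3 := hgS n
    simp only [hS, Set.mem_setOf_eq]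
    nlinarith
  have hLfx : L ≤ f x := by
    have h1 : ∀ n : ℕ, L ≤ f x + (1/2)^n := by
      intro n
      have h2 : sInf (f '' S (u n)) ≤ f x := csInf_le (hSbdd _) (Set.mem_image_of_mem f (hxS n))
      have h3 := hlt n
      have h4 := hLle (n+1)
      linarith
    have h5 : Tendsto (fun n : ℕ => f x + (1/2)^n) atTop (nhds (f x + 0)) :=
      tendsto_const_nhds.add (tendsto_pow_atTop_nhds_zero_of_lt_one (by norm_num) (by norm_num))
    rw [add_zero] at h5
    exact ge_of_tendsto' h5 h1
  nlinarith [mul_nonneg hε.le (dist_nonneg (x := x) (y := g))]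

/-- Lower bound for the Clarke derivative at a point satisfying an Ekeland-type inequality. -/
theorem clarkeDeriv_ge {X : Type*} [NormedAddCommGroup X] [NormedSpace ℝ X]
    (f : X → ℝ) (hlip : LocallyLipschitz f) (g : X) (c : ℝ) (hc : 0 ≤ c)
    (hek : ∀ x, f g ≤ f x + c * dist x g) (h : X) :
    -(c * ‖h‖) ≤ clarkeDeriv f g h := by
  obtain ⟨K, U, hU, hK⟩ := hlip g
  obtain ⟨r, hr, hball⟩ := Metric.mem_nhds_iff.mp hU
  have hbound : IsBoundedUnder (· ≤ ·) ((nhds g) ×ˢ (nhdsWithin 0 (Set.Ioi 0)))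
      (fun p : X × ℝ => (f (p.1 + p.2 • h) - f p.1) / p.2) := by
    refine ⟨K * ‖h‖, ?_⟩
    rw [eventually_map]
    have h1 : Metric.ball g (r/2) ∈ nhds g := Metric.ball_mem_nhds g (by positivity)
    have h2 : Set.Ioo (0:ℝ) (r / (2 * (‖h‖ + 1))) ∈ nhdsWithin 0 (Set.Ioi 0) :=
      Ioo_mem_nhdsGT_of_mem (by constructor <;> [rfl; positivity])
    filter_upwards [prod_mem_prod h1 h2] with p hp
    have hp1 := hp.1
    have hp2 := hp.2.1
    have hp3 := hp.2.2
    have hy : p.1 ∈ U := hball (Metric.ball_subset_ball (by linarith) hp1)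
    have hyh : p.1 + p.2 • h ∈ U := by
      apply hball
      rw [Metric.mem_ball, dist_eq_norm]
      have : ‖p.1 + p.2 • h - g‖ ≤ ‖p.1 - g‖ + ‖p.2 • h‖ := by
        have := norm_add_le (p.1 - g) (p.2 • h); rwa [sub_add_eq_add_sub] at this
      have hnorm : ‖p.2 • h‖ = p.2 * ‖h‖ := by
        rw [norm_smul, Real.norm_eq_abs, abs_of_pos hp2]
      have hb1 : ‖p.1 - g‖ < r/2 := by rwa [Metric.mem_ball, dist_eq_norm] at hp1
      have hb2 : p.2 * ‖h‖ < r/2 := by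
        calc p.2 * ‖h‖ ≤ p.2 * (‖h‖ + 1) := by nlinarith
          _ < (r / (2 * (‖h‖ + 1))) * (‖h‖ + 1) := by
              apply mul_lt_mul_of_pos_right hp3; positivity
          _ = r/2 := by field_simp
      linarith [this, hnorm ▸ hb2]
    have hdq : |f (p.1 + p.2 • h) - f p.1| ≤ K * (p.2 * ‖h‖) := by
      have := hK.dist_le_mul _ hyh _ hy
      rw [Real.dist_eq, dist_eq_norm] at this
      calc |f (p.1 + p.2 • h) - f p.1| ≤ K * ‖p.1 + p.2 • h - p.1‖ := this
        _ = K * (p.2 * ‖h‖) := by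
            rw [add_sub_cancel_left, norm_smul, Real.norm_eq_abs, abs_of_pos hp2]
    rw [div_le_iff₀ hp2]
    calc f (p.1 + p.2 • h) - f p.1 ≤ |f (p.1 + p.2 • h) - f p.1| := le_abs_self _
      _ ≤ K * (p.2 * ‖h‖) := hdq
      _ = K * ‖h‖ * p.2 := by ring
  apply Filter.le_limsup_of_frequently_le ?_ hbound
  have hle : pure g ×ˢ nhdsWithin (0:ℝ) (Set.Ioi 0) ≤ (nhds g) ×ˢ (nhdsWithin 0 (Set.Ioi 0)) :=
    Filter.prod_mono (pure_le_nhds g) le_rfl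
  have hne : (pure g ×ˢ nhdsWithin (0:ℝ) (Set.Ioi 0)).NeBot := Filter.prod_neBot.mpr ⟨inferInstance, inferInstance⟩
  apply Frequently.filter_mono ?_ hle
  apply Eventually.frequently
  have hev : ({g} ×ˢ Set.Ioi (0:ℝ)) ∈ pure g ×ˢ nhdsWithin (0:ℝ) (Set.Ioi 0) :=
    Filter.prod_mem_prod (by simp) self_mem_nhdsWithin
  filter_upwards [hev] with p hp
  have hp1 : p.1 = g := hp.1
  have hp2' : (0:ℝ) < p.2 := hp.2
  rw [hp1]
  rw [le_div_iff₀ hp2']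
  have := hek (g + p.2 • h)
  rw [dist_eq_norm, add_sub_cancel_left, norm_smul, Real.norm_eq_abs, abs_of_pos hp2'] at this
  nlinarith

/-- Cerami-type minimizing sequences. -/
theorem cerami_minimizing_sequence_locallyLipschitz
    {X : Type*} [NormedAddCommGroup X] [NormedSpace ℝ X] [CompleteSpace X]
    (f : X → ℝ) (hlip : LocallyLipschitz f)
    (hlsc : LowerSemicontinuous f) (hbdd : BddBelow (Set.range f))
    (ε : ℕ → ℝ) (hεpos : ∀ n, 0 < ε n) (hεanti : StrictAnti ε)
    (hεto : Tendsto ε atTop (nhds 0)) :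
    ∃ g : ℕ → X,
      Tendsto (fun n => f (g n)) atTop (nhds (⨅ y, f y)) ∧
      ∀ n, ∀ h : X, clarkeDeriv f (g n) h ≥ -(ε n) * ‖h‖ * (1 + ‖g n‖)⁻¹ := by
  obtain ⟨B, hB⟩ := hbdd
  have hB' : ∀ x, B ≤ f x := fun x => hB ⟨x, rfl⟩
  set m : ℝ := ⨅ y, f y with hm
  have hmle : ∀ x, m ≤ f x := fun x => ciInf_le ⟨B, fun a ⟨y, hy⟩ => hy ▸ hB' y⟩ x
  -- choose approximate minimizers and apply Ekeland
  have key : ∀ n : ℕ, ∃ g : X, m ≤ f g ∧ f g ≤ m + 1/(n+1) ∧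
      ∀ h : X, -(ε n) * ‖h‖ * (1 + ‖g‖)⁻¹ ≤ clarkeDeriv f g h := by
    intro n
    set μ : ℝ := min (ε n / 2) (1/(n+1)) with hμ
    have hμpos : 0 < μ := by
      apply lt_min
      · linarith [hεpos n]
      · positivity
    obtain ⟨x₀, hx₀⟩ : ∃ x₀ : X, f x₀ < m + μ := by
      have : m < m + μ := lt_add_of_pos_right _ hμpos
      exact exists_lt_of_ciInf_lt this
    set M : ℝ := 1 + ‖x₀‖ with hM
    have hMpos : 0 < M := by positivity
    set ε' : ℝ := ε n / (2 * M) with hε'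
    have hε'pos : 0 < ε' := by rw [hε']; exact div_pos (hεpos n) (by positivity)
    obtain ⟨g, hg1, hg2⟩ := my_ekeland f hlsc B hB' x₀ ε' hε'pos
    have hfg : f g ≤ f x₀ := by
      nlinarith [mul_nonneg hε'pos.le (dist_nonneg (x := g) (y := x₀))]
    have hdist : dist g x₀ ≤ M := by
      have h1 : ε' * dist g x₀ ≤ f x₀ - f g := by linarith
      have h2 : f x₀ - f g ≤ μ := by linarith [hmle g]
      have h3 : μ ≤ ε n / 2 := min_le_left _ _
      have h4 : ε' * M = ε n / 2 := by rw [hε']; field_simp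
      nlinarith
    have hnorm : 1 + ‖g‖ ≤ 2 * M := by
      have : ‖g‖ ≤ ‖x₀‖ + dist g x₀ := by
        rw [dist_eq_norm]
        calc ‖g‖ = ‖x₀ + (g - x₀)‖ := by congr 1; abel
          _ ≤ ‖x₀‖ + ‖g - x₀‖ := norm_add_le _ _
      rw [hM]; linarith
    have hε'le : ε' ≤ ε n * (1 + ‖g‖)⁻¹ := by
      have hinv : (2*M)⁻¹ ≤ (1+‖g‖)⁻¹ := inv_anti₀ (by positivity) hnorm
      calc ε' = ε n * (2*M)⁻¹ := div_eq_mul_inv _ _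
        _ ≤ ε n * (1+‖g‖)⁻¹ := mul_le_mul_of_nonneg_left hinv (hεpos n).le
    refine ⟨g, hmle g, ?_, ?_⟩
    · have : μ ≤ 1/(n+1) := min_le_right _ _
      linarith
    · intro h
      have hcd := clarkeDeriv_ge f hlip g ε' hε'pos.le hg2 h
      have : -(ε n) * ‖h‖ * (1 + ‖g‖)⁻¹ ≤ -(ε' * ‖h‖) := by
        have := mul_le_mul_of_nonneg_right hε'le (norm_nonneg h)
        nlinarith [norm_nonneg h]
      linarith
  choose g hg1 hg2 hg3 using key
  refine ⟨g, ?_, fun n h => hg3 n h⟩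
  have hup : Tendsto (fun n : ℕ => m + 1/(n+1:ℝ)) atTop (nhds (m + 0)) :=
    tendsto_const_nhds.add tendsto_one_div_add_atTop_nhds_zero_nat
  rw [add_zero] at hup
  exact tendsto_of_tendsto_of_tendsto_of_le_of_le tendsto_const_nhds hup hg1 hg2
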